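/- Let e : L → C be a canonical extension of a bounded lattice L and let M ⊆ L be finite. Then M is join-admissible if and only if for every completely join-irreducible x ∈ J∞(C), x ≤ ⨆e[M] implies x ≤ e(m) for some m ∈ M. -/

import Mathlib

/-- A finite subset `M` of a bounded lattice is join-admissible if its join
distributes over all meets with elements of the lattice. -/
def JoinAdmissible {L : Type*} [Lattice L] [BoundedOrder L] (M : Finset L) : Prop :=
  ∀ a : L, a ⊓ M.sup id = M.sup fun m => a ⊓ m

/-- An a-ideal: a downward-closed subset closed under admissible joins. -/
def IsAIdeal {L : Type*} [Lattice L] [BoundedOrder L] (A : Set L) : Prop :=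
  (∀ a ∈ A, ∀ b, b ≤ a → b ∈ A) ∧
  ∀ M : Finset L, ↑M ⊆ A → JoinAdmissible M → M.sup id ∈ A

/-- The smallest a-ideal containing `T`. -/
def aIdealGen {L : Type*} [Lattice L] [BoundedOrder L] (T : Set L) : Set L :=
  ⋂₀ {A : Set L | IsAIdeal A ∧ T ⊆ A}

/-- An element `x` of a complete lattice is completely join-irreducible if
`x ∈ S` whenever `x = ⨆ S`. -/
def CompletelyJoinIrreducible {C : Type*} [CompleteLattice C] (x : C) : Prop :=
  ∀ S : Set C, x = sSup S → x ∈ S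

/-- An element `y` of a complete lattice is completely meet-irreducible if
`y ∈ S` whenever `y = ⨅ S`. -/
def CompletelyMeetIrreducible {C : Type*} [CompleteLattice C] (y : C) : Prop :=
  ∀ S : Set C, y = sInf S → y ∈ S

/-- `e : L → C` is a canonical extension of the bounded lattice `L`: an injective
bounded-lattice homomorphism into a complete lattice `C` which is dense and compact. -/
def IsCanonicalExtension {L C : Type*} [Lattice L] [BoundedOrder L] [CompleteLattice C]
    (e : L → C) : Prop :=
  Function.Injective e ∧
  (∀ a b : L, e (a ⊓ b) = e a ⊓ e b) ∧
  (∀ a b : L, e (a ⊔ b) = e a ⊔ e b) ∧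
  e ⊥ = ⊥ ∧ e ⊤ = ⊤ ∧
  -- denseness
  (∀ u : C,
    u = sSup {v : C | ∃ S : Set L, v = sInf (e '' S) ∧ v ≤ u} ∧
    u = sInf {v : C | ∃ T : Set L, v = sSup (e '' T) ∧ u ≤ v}) ∧
  -- compactness
  (∀ S T : Set L, sInf (e '' S) ≤ sSup (e '' T) →
    ∃ S' T' : Finset L, ↑S' ⊆ S ∧ ↑T' ⊆ T ∧ S'.inf id ≤ T'.sup id)

section ZornMin

private theorem zorn_min_aux {α : Type*} [PartialOrder α] (s : Set α)
    (ih : ∀ c ⊆ s, IsChain (· ≤ ·) c → ∀ y ∈ c, ∃ lb ∈ s, ∀ z ∈ c, lb ≤ z)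
    (x : α) (hxs : x ∈ s) :
    ∃ m ∈ s, m ≤ x ∧ ∀ z ∈ s, z ≤ m → z = m := by
  obtain ⟨m, hxm, hms, hmax⟩ := zorn_le_nonempty₀ (α := αᵒᵈ) s
    (fun c hcs hc y hy => ih c hcs hc.symm y hy) x hxs
  exact ⟨m, hms, hxm, fun z hzs hzm => le_antisymm hzm (hmax hzs hzm)⟩

end ZornMin

section Helpers

variable {L C : Type*} [Lattice L] [BoundedOrder L] [CompleteLattice C] {e : L → C}

private theorem ce_mono (hmeet : ∀ a b : L, e (a ⊓ b) = e a ⊓ e b) {a b : L} (hab : a ≤ b) :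
    e a ≤ e b :=
  inf_eq_left.mp (by rw [← hmeet, inf_eq_left.mpr hab])

private theorem ce_le (hinj : Function.Injective e)
    (hmeet : ∀ a b : L, e (a ⊓ b) = e a ⊓ e b) {a b : L} (hab : e a ≤ e b) : a ≤ b := by
  have : e (a ⊓ b) = e a := by rw [hmeet]; exact inf_eq_left.mpr hab
  exact inf_eq_left.mp (hinj this)

private theorem ce_finsetSup (hjoin : ∀ a b : L, e (a ⊔ b) = e a ⊔ e b) (hbot : e ⊥ = ⊥)
    {ι : Type*} (s : Finset ι) (f : ι → L) :
    e (s.sup f) = s.sup fun i => e (f i) := by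
  classical
  induction s using Finset.induction_on with
  | empty => simpa using hbot
  | insert _ _ _ ih => rw [Finset.sup_insert, Finset.sup_insert, hjoin, ih]

private theorem ce_finsetInf (hmeet : ∀ a b : L, e (a ⊓ b) = e a ⊓ e b) (htop : e ⊤ = ⊤)
    {ι : Type*} (s : Finset ι) (f : ι → L) :
    e (s.inf f) = s.inf fun i => e (f i) := by
  classical
  induction s using Finset.induction_on with
  | empty => simpa using htop
  | insert _ _ _ ih => rw [Finset.inf_insert, Finset.inf_insert, hmeet, ih]

private theorem ce_sSup_image (hjoin : ∀ a b : L, e (a ⊔ b) = e a ⊔ e b) (hbot : e ⊥ = ⊥)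
    (M : Finset L) : sSup (e '' (M : Set L)) = e (M.sup id) := by
  classical
  rw [ce_finsetSup hjoin hbot]
  rw [← Finset.coe_image, ← Finset.sup_id_eq_sSup, Finset.sup_image]
  rfl

end Helpers

/-- A finite subset `M` of a bounded lattice `L` is join-admissible iff, in a canonical
extension `e : L → C`, every completely join-irreducible element below `⨆ e[M]` is
below `e m` for some `m ∈ M`. -/
theorem joinAdmissible_iff_canonicalExtension {L C : Type*} [Lattice L] [BoundedOrder L]
    [CompleteLattice C] (e : L → C) (h : IsCanonicalExtension e) (M : Finset L) :
    JoinAdmissible M ↔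
      ∀ x : C, CompletelyJoinIrreducible x → x ≤ sSup (e '' (M : Set L)) →
        ∃ m ∈ M, x ≤ e m := by
  classical
  obtain ⟨hinj, hmeet, hjoin, hbot, htop, hdense, hcompact⟩ := h
  have hsS : sSup (e '' (M : Set L)) = e (M.sup id) := ce_sSup_image hjoin hbot M
  constructor
  · intro hadm x hx hxle
    rw [hsS] at hxle
    set F : Set L := {a | x ≤ e a} with hF
    have hxF : sInf (e '' F) = x := by
      obtain ⟨S, hS1, hS2⟩ := hx _ (hdense x).1
      refine le_antisymm ?_ (le_sInf ?_)
      · refine le_trans (sInf_le_sInf (Set.image_mono fun a ha => ?_)) hS1.symm.le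
        show x ≤ e a
        rw [hS1]; exact sInf_le ⟨a, ha, rfl⟩
      · rintro v ⟨a, ha, rfl⟩; exact ha
    by_contra hno
    push_neg at hno
    have key : ∀ m ∈ M, x ⊓ e m = sInf (e '' (F ∪ {m})) := by
      intro m hm
      rw [Set.image_union, sInf_union, Set.image_singleton, sInf_singleton, hxF]
    set u := sSup ((fun m => x ⊓ e m) '' (M : Set L)) with hu
    have hux : x ≤ u := by
      by_contra hxu
      have hex : ∃ y, (∃ T : Set L, y = sSup (e '' T) ∧ u ≤ y) ∧ ¬ x ≤ y := by
        by_contra hcon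
        push_neg at hcon
        exact hxu (by rw [(hdense u).2]; exact le_sInf fun y hy => hcon y hy)
      obtain ⟨y, ⟨I, hyI, huy⟩, hxy⟩ := hex
      have hper : ∀ m ∈ M, ∃ cb : L × L, x ≤ e cb.1 ∧ cb.1 ⊓ m ≤ cb.2 ∧ e cb.2 ≤ y := by
        intro m hm
        have h1 : sInf (e '' (F ∪ {m})) ≤ sSup (e '' I) := by
          rw [← key m hm, ← hyI]
          have hxm : x ⊓ e m ≤ u := by
            rw [hu]; exact le_sSup ⟨m, Finset.mem_coe.mpr hm, rfl⟩
          exact hxm.trans huy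
        obtain ⟨S', T', hS', hT', hst⟩ := hcompact _ _ h1
        refine ⟨((S'.filter (· ∈ F)).inf id, T'.sup id), ?_, ?_, ?_⟩
        · rw [ce_finsetInf hmeet htop]
          exact Finset.le_inf fun s hs => (Finset.mem_filter.mp hs).2
        · refine le_trans (Finset.le_inf fun s hs => ?_) hst
          rcases hS' hs with hsF | hsm
          · exact inf_le_left.trans (Finset.inf_le (Finset.mem_filter.mpr ⟨hs, hsF⟩))
          · rw [Set.mem_singleton_iff] at hsm
            rw [hsm]; exact inf_le_right
        · rw [ce_finsetSup hjoin hbot, hyI]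
          exact Finset.sup_le fun t ht => le_sSup ⟨t, hT' ht, rfl⟩
      choose! cb hc1 hc2 hc3 using hper
      set a := M.inf fun m => (cb m).1 with ha
      have hxa : x ≤ e a := by
        rw [ha, ce_finsetInf hmeet htop]
        exact Finset.le_inf fun m hm => hc1 m hm
      have hsup : (M.sup fun m => a ⊓ m) ≤ M.sup fun m => (cb m).2 :=
        Finset.sup_le fun m hm =>
          le_trans (le_trans (inf_le_inf_right m (Finset.inf_le hm)) (hc2 m hm))
            (Finset.le_sup (f := fun m => (cb m).2) hm)
      have hab : a ⊓ M.sup id ≤ M.sup fun m => (cb m).2 := by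
        rw [hadm a]; exact hsup
      refine hxy ?_
      calc x ≤ e (a ⊓ M.sup id) := by rw [hmeet]; exact le_inf hxa hxle
        _ ≤ e (M.sup fun m => (cb m).2) := ce_mono hmeet hab
        _ = M.sup fun m => e (cb m).2 := ce_finsetSup hjoin hbot _ _
        _ ≤ y := Finset.sup_le fun m hm => hc3 m hm
    have hxu' : u ≤ x := by
      rw [hu]
      exact sSup_le (by rintro v ⟨m, hm, rfl⟩; exact inf_le_left)
    obtain ⟨m, hm, hme⟩ := hx _ ((le_antisymm hux hxu').trans hu)
    refine absurd ?_ (hno m hm)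
    rw [← hme]; exact inf_le_right
  · intro hJ a
    refine le_antisymm ?_
      (Finset.sup_le fun m hm => le_inf inf_le_left (inf_le_right.trans (Finset.le_sup (f := id) hm)))
    by_contra hbc
    set b := a ⊓ M.sup id with hb
    set c := M.sup fun m => a ⊓ m with hc
    have hebc : ¬ e b ≤ e c := fun hle => hbc (ce_le hinj hmeet hle)
    set 𝒞 : Set C := {z | (∃ S : Set L, z = sInf (e '' S)) ∧ z ≤ e b ∧ ¬ z ≤ e c} with h𝒞
    have hcl : ∀ z : C, (∃ S : Set L, z = sInf (e '' S)) → z = sInf (e '' {a' | z ≤ e a'}) := by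
      rintro z ⟨S, rfl⟩
      refine le_antisymm (le_sInf ?_) ?_
      · rintro v ⟨a', ha', rfl⟩; exact ha'
      · exact sInf_le_sInf (Set.image_mono fun a' haS => sInf_le ⟨a', haS, rfl⟩)
    have hmemb : e b ∈ 𝒞 := ⟨⟨{b}, by simp⟩, le_rfl, hebc⟩
    have hchain : ∀ D ⊆ 𝒞, IsChain (· ≤ ·) D → ∀ y ∈ D, ∃ lb ∈ 𝒞, ∀ z ∈ D, lb ≤ z := by
      intro D hD hDchain y0 hy0
      set Fz : C → Set L := fun z => {a' | z ≤ e a'} with hFz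
      set U : Set L := ⋃ z ∈ D, Fz z with hU
      have hzF : ∀ z ∈ D, z = sInf (e '' Fz z) := fun z hz => hcl z (hD hz).1
      have hwle : ∀ z ∈ D, sInf (e '' U) ≤ z := by
        intro z hz
        rw [hzF z hz]
        exact sInf_le_sInf (Set.image_mono (Set.subset_biUnion_of_mem hz))
      refine ⟨sInf (e '' U), ⟨⟨U, rfl⟩, (hwle y0 hy0).trans (hD hy0).2.1, ?_⟩, hwle⟩
      intro hwc
      have h2 : sInf (e '' U) ≤ sSup (e '' {c}) := by
        rwa [Set.image_singleton, sSup_singleton]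
      obtain ⟨S', T', hS', hT', hst⟩ := hcompact _ _ h2
      have hT'c : T'.sup id ≤ c := Finset.sup_le fun t ht => le_of_eq (hT' ht)
      have hFzanti : ∀ {z z' : C}, z ≤ z' → Fz z' ⊆ Fz z :=
        fun hzz' a' ha' => le_trans hzz' ha'
      have hsub : ∀ s : Finset L, (↑s : Set L) ⊆ U → ∃ z ∈ D, (↑s : Set L) ⊆ Fz z := by
        intro s
        induction s using Finset.induction_on with
        | empty => exact fun _ => ⟨y0, hy0, by simp⟩
        | @insert a' s ha' ih =>
          intro hins
          rw [Finset.coe_insert, Set.insert_subset_iff] at hins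
          obtain ⟨z1, hz1, hsz1⟩ := ih hins.2
          obtain ⟨z2, hz2, haz2⟩ := Set.mem_iUnion₂.mp hins.1
          rcases eq_or_ne z1 z2 with rfl | hne
          · exact ⟨z1, hz1, by rw [Finset.coe_insert]; exact Set.insert_subset haz2 hsz1⟩
          rcases hDchain.total hz1 hz2 with h12 | h21
          · exact ⟨z1, hz1, by
              rw [Finset.coe_insert]
              exact Set.insert_subset (hFzanti h12 haz2) hsz1⟩
          · exact ⟨z2, hz2, by
              rw [Finset.coe_insert]
              exact Set.insert_subset haz2 (hsz1.trans (hFzanti h21))⟩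
      obtain ⟨z, hzD, hz⟩ := hsub S' hS'
      have hzc : z ≤ e c := by
        have : z ≤ e (S'.inf id) := by
          rw [ce_finsetInf hmeet htop]
          exact Finset.le_inf fun s hs => hz hs
        exact this.trans ((ce_mono hmeet hst).trans (ce_mono hmeet hT'c))
      exact (hD hzD).2.2 hzc
    obtain ⟨j, hj𝒞, hjb, hjmin⟩ := zorn_min_aux 𝒞 hchain (e b) hmemb
    obtain ⟨hjcl, hjeb, hjc⟩ := hj𝒞
    have hjirr : ∀ S : Set C, j = sSup S → j ∈ S := by
      intro S hSsup
      by_contra hjS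
      refine hjc ?_
      rw [hSsup]
      refine sSup_le fun s hs => ?_
      have hsj : s ≤ j := by rw [hSsup]; exact le_sSup hs
      by_contra hsc'
      have hexv : ∃ v, (∃ Sv : Set L, v = sInf (e '' Sv) ∧ v ≤ s) ∧ ¬ v ≤ e c := by
        by_contra hcon
        push_neg at hcon
        refine hsc' ?_
        conv_lhs => rw [(hdense s).1]
        exact sSup_le fun v hv => hcon v hv
      obtain ⟨v, ⟨Sv, hv1, hv2⟩, hvc⟩ := hexv
      have hv𝒞 : v ∈ 𝒞 := ⟨⟨Sv, hv1⟩, (hv2.trans hsj).trans hjeb, hvc⟩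
      have hvj : v = j := hjmin v hv𝒞 (hv2.trans hsj)
      have : s = j := le_antisymm hsj (hvj ▸ hv2)
      exact hjS (this ▸ hs)
    have hjM : j ≤ sSup (e '' (M : Set L)) := by
      rw [hsS]
      exact hjeb.trans (ce_mono hmeet inf_le_right)
    obtain ⟨m, hm, hjm⟩ := hJ j hjirr hjM
    refine hjc ?_
    have : j ≤ e (a ⊓ m) := by rw [hmeet]; exact le_inf (hjeb.trans (ce_mono hmeet inf_le_left)) hjm
    have hamc : a ⊓ m ≤ c := by rw [hc]; exact Finset.le_sup hm
    exact this.trans (ce_mono hmeet hamc)
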